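/- Let T = 2I be twice the 2×2 identity matrix and D = { (0,0)ᵀ, (1,0)ᵀ, (0,1)ᵀ, (−1,−1)ᵀ } ⊂ ℤ². Then the attractor F(T,D) (the Sierpiński tile) is connected and has positive Lebesgue measure. -/

import Mathlib

open MeasureTheory
open scoped Pointwise

/-- The canonical cast of an integer vector to a real vector. -/
def castVec {k : ℕ} (d : Fin k → ℤ) : Fin k → ℝ := fun i => (d i : ℝ)

namespace Stmt13Aux

variable {D : Finset (Fin 2 → ℤ)} {F : Set (Fin 2 → ℝ)}

/-- Each piece map sends `F` into `F`. -/
theorem map_mem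
    (hfix : F = ⋃ d ∈ D, (fun x => (2 : ℝ)⁻¹ • (x + castVec d)) '' F)
    {d : Fin 2 → ℤ} (hd : d ∈ D) {z : Fin 2 → ℝ} (hz : z ∈ F) :
    (2 : ℝ)⁻¹ • (z + castVec d) ∈ F := by
  rw [hfix]
  exact Set.mem_biUnion hd ⟨z, hz, rfl⟩

/-- The fixed point of each piece map (the digit itself) lies in `F`. -/
theorem digit_mem (hne : F.Nonempty) (hclosed : IsClosed F)
    (hfix : F = ⋃ d ∈ D, (fun x => (2 : ℝ)⁻¹ • (x + castVec d)) '' F)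
    {d : Fin 2 → ℤ} (hd : d ∈ D) : castVec d ∈ F := by
  obtain ⟨x0, hx0⟩ := hne
  set c := castVec d with hc
  have key : ∀ n : ℕ, c + ((2 : ℝ)⁻¹) ^ n • (x0 - c) ∈ F := by
    intro n
    induction n with
    | zero => simpa using hx0
    | succ n ih =>
      have h2 := map_mem hfix hd ih
      rw [← hc] at h2
      convert h2 using 1
      rw [pow_succ]
      module
  have h2 : Filter.Tendsto (fun n : ℕ => ((2 : ℝ)⁻¹) ^ n) Filter.atTop (nhds 0) :=
    tendsto_pow_atTop_nhds_zero_of_lt_one (by norm_num) (by norm_num)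
  have hlim : Filter.Tendsto (fun n : ℕ => c + ((2 : ℝ)⁻¹) ^ n • (x0 - c))
      Filter.atTop (nhds c) := by
    have := (h2.smul_const (x0 - c)).const_add c
    simpa using this
  exact hclosed.mem_of_tendsto hlim (Filter.Eventually.of_forall key)

/-- Chains at scale `C / 2 ^ n` between any two points of `F`. -/
theorem chains (hne : F.Nonempty) (hclosed : IsClosed F)
    (hfix : F = ⋃ d ∈ D, (fun x => (2 : ℝ)⁻¹ • (x + castVec d)) '' F)
    {C : ℝ} (hC : ∀ x ∈ F, ∀ y ∈ F, dist x y ≤ C) :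
    ∀ n : ℕ, ∀ x ∈ F, ∀ y ∈ F,
      Relation.ReflTransGen (fun a b => b ∈ F ∧ dist a b ≤ C / 2 ^ n) x y := by
  intro n
  induction n with
  | zero =>
    intro x hx y hy
    exact Relation.ReflTransGen.single ⟨hy, by simpa using hC x hx y hy⟩
  | succ n ih =>
    intro x hx y hy
    -- decompose x and y into pieces
    have hx' : x ∈ ⋃ d ∈ D, (fun x => (2 : ℝ)⁻¹ • (x + castVec d)) '' F := hfix ▸ hx
    have hy' : y ∈ ⋃ d ∈ D, (fun x => (2 : ℝ)⁻¹ • (x + castVec d)) '' F := hfix ▸ hy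
    simp only [Set.mem_iUnion, Set.mem_image] at hx' hy'
    obtain ⟨dx, hdx, x', hx'F, hxe⟩ := hx'
    obtain ⟨dy, hdy, y', hy'F, hye⟩ := hy'
    -- lifting lemma
    have lift : ∀ d ∈ D, ∀ a b : Fin 2 → ℝ,
        Relation.ReflTransGen (fun a b => b ∈ F ∧ dist a b ≤ C / 2 ^ n) a b →
        Relation.ReflTransGen (fun a b => b ∈ F ∧ dist a b ≤ C / 2 ^ (n + 1))
          ((2 : ℝ)⁻¹ • (a + castVec d)) ((2 : ℝ)⁻¹ • (b + castVec d)) := by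
      intro d hd a b hab
      refine Relation.ReflTransGen.lift (fun z => (2 : ℝ)⁻¹ • (z + castVec d)) ?_ _ _ hab
      rintro p q ⟨hqF, hpq⟩
      refine ⟨map_mem hfix hd hqF, ?_⟩
      have hdist : dist ((2 : ℝ)⁻¹ • (p + castVec d)) ((2 : ℝ)⁻¹ • (q + castVec d))
          = (2 : ℝ)⁻¹ * dist p q := by
        rw [dist_smul₀, dist_add_right]
        norm_num
      rw [hdist, pow_succ]
      calc (2 : ℝ)⁻¹ * dist p q ≤ (2 : ℝ)⁻¹ * (C / 2 ^ n) := by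
            apply mul_le_mul_of_nonneg_left hpq (by norm_num)
        _ = C / (2 ^ n * 2) := by ring
    have hdxF : castVec dx ∈ F := digit_mem hne hclosed hfix hdx
    have hdyF : castVec dy ∈ F := digit_mem hne hclosed hfix hdy
    -- chain from x to the common point of pieces dx and dy
    have c1 : Relation.ReflTransGen (fun a b => b ∈ F ∧ dist a b ≤ C / 2 ^ (n + 1)) x
        ((2 : ℝ)⁻¹ • (castVec dy + castVec dx)) := by
      have := lift dx hdx x' (castVec dy) (ih x' hx'F (castVec dy) hdyF)
      rwa [hxe] at this
    have c2 : Relation.ReflTransGen (fun a b => b ∈ F ∧ dist a b ≤ C / 2 ^ (n + 1))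
        ((2 : ℝ)⁻¹ • (castVec dx + castVec dy)) y := by
      have := lift dy hdy (castVec dx) y' (ih (castVec dx) hdxF y' hy'F)
      rwa [hye] at this
    have hcomm : (2 : ℝ)⁻¹ • (castVec dy + castVec dx)
        = (2 : ℝ)⁻¹ • (castVec dx + castVec dy) := by rw [add_comm]
    exact c1.trans (hcomm ▸ c2)

/-- Compact + ε-chain connected implies preconnected. -/
theorem preconnected_of_chains (hcpt : IsCompact F)
    (h : ∀ ε : ℝ, 0 < ε → ∀ x ∈ F, ∀ y ∈ F,
      Relation.ReflTransGen (fun a b => b ∈ F ∧ dist a b ≤ ε) x y) :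
    IsPreconnected F := by
  intro u v hu hv hsub ⟨x, hxF, hxu⟩ ⟨y, hyF, hyv⟩
  by_contra hempty
  rw [Set.not_nonempty_iff_eq_empty] at hempty
  have hnotboth : ∀ z ∈ F, ¬(z ∈ u ∧ z ∈ v) := by
    intro z hz hzc
    have : z ∈ F ∩ (u ∩ v) := ⟨hz, hzc.1, hzc.2⟩
    rw [hempty] at this
    exact this
  set A : Set (Fin 2 → ℝ) := F ∩ vᶜ with hA
  set B : Set (Fin 2 → ℝ) := F ∩ uᶜ with hB
  have hAclosed : IsClosed A := hcpt.isClosed.inter hv.isClosed_compl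
  have hBclosed : IsClosed B := hcpt.isClosed.inter hu.isClosed_compl
  have hAcpt : IsCompact A := hcpt.of_isClosed_subset hAclosed Set.inter_subset_left
  have hxA : x ∈ A := ⟨hxF, fun hxv => hnotboth x hxF ⟨hxu, hxv⟩⟩
  have hyB : y ∈ B := ⟨hyF, fun hyu => hnotboth y hyF ⟨hyu, hyv⟩⟩
  -- positive distance between A and B
  obtain ⟨a0, ha0A, ha0min⟩ := hAcpt.exists_isMinOn ⟨x, hxA⟩
    ((Metric.continuous_infDist_pt B).continuousOn)
  have ha0B : a0 ∉ B := fun hB' => by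
    rcases hB' with ⟨_, hnu⟩
    rcases ha0A with ⟨haF, hnv⟩
    rcases hsub haF with h1 | h1
    exacts [hnu h1, hnv h1]
  have hδpos : 0 < Metric.infDist a0 B :=
    (hBclosed.notMem_iff_infDist_pos ⟨y, hyB⟩).1 ha0B
  set δ := Metric.infDist a0 B with hδ
  -- every chain point starting in A stays in A
  have key : ∀ z : Fin 2 → ℝ,
      Relation.ReflTransGen (fun a b => b ∈ F ∧ dist a b ≤ δ / 2) x z → z ∈ A := by
    intro z hz
    induction hz with
    | refl => exact hxA
    | @tail p q _hpq hrel ih =>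
      obtain ⟨hqF, hd⟩ := hrel
      by_contra hqA
      have hqv : q ∈ v := by
        by_contra hqv
        exact hqA ⟨hqF, hqv⟩
      have hqu : q ∉ u := fun hqu => hnotboth q hqF ⟨hqu, hqv⟩
      have hqB : q ∈ B := ⟨hqF, hqu⟩
      have h1 : δ ≤ Metric.infDist p B := ha0min ih
      have h2 : Metric.infDist p B ≤ dist p q := Metric.infDist_le_dist_of_mem hqB
      linarith
  have := key y (h (δ / 2) (by linarith) x hxF y hyF)
  exact this.2 hyv

/-- Turning an even-difference lattice vector into the `F`-piece decomposition of a half. -/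
theorem half_aux
    (hfix : F = ⋃ d ∈ D, (fun x => (2 : ℝ)⁻¹ • (x + castVec d)) '' F)
    {d : Fin 2 → ℤ} (hdD : d ∈ D) {f : Fin 2 → ℝ} (hf : f ∈ F)
    (v : Fin 2 → ℤ) (h : ∀ i, Even (v i - d i)) :
    ∃ g ∈ F, ∃ w : Fin 2 → ℤ, (2 : ℝ)⁻¹ • (f + castVec v) = g + castVec w := by
  choose w hw using h
  refine ⟨(2 : ℝ)⁻¹ • (f + castVec d), map_mem hfix hdD hf, w, funext fun i => ?_⟩
  have h2 := hw i
  have h3 : (v i : ℝ) = d i + 2 * w i := by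
    have : ((v i : ℝ) - d i) = w i + w i := by exact_mod_cast congrArg (Int.cast : ℤ → ℝ) h2
    linarith
  simp only [Pi.smul_apply, Pi.add_apply, castVec, smul_eq_mul]
  rw [h3]; ring

end Stmt13Aux

/-- For `T = 2I` (so `T⁻¹(x+d) = (1/2)•(x+d)`) and
`D = {(0,0)ᵀ, (1,0)ᵀ, (0,1)ᵀ, (-1,-1)ᵀ}`, the attractor `F(T,D)` (the Sierpiński tile,
the unique nonempty compact set with `F = ⋃_{d ∈ D} T⁻¹(F + d)`) is connected and has
positive Lebesgue measure. -/
theorem stmt13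
    (D : Finset (Fin 2 → ℤ))
    (hD : D = {![0, 0], ![1, 0], ![0, 1], ![-1, -1]})
    (F : Set (Fin 2 → ℝ)) (hne : F.Nonempty) (hcpt : IsCompact F)
    (hfix : F = ⋃ d ∈ D, (fun x => (2 : ℝ)⁻¹ • (x + castVec d)) '' F) :
    IsConnected F ∧ 0 < volume F := by
  have hclosed : IsClosed F := hcpt.isClosed
  constructor
  · -- connectedness
    refine ⟨hne, Stmt13Aux.preconnected_of_chains hcpt ?_⟩
    obtain ⟨C, hC⟩ := Metric.isBounded_iff.1 hcpt.isBounded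
    intro ε hε x hx y hy
    obtain ⟨n, hn⟩ := pow_unbounded_of_one_lt (C / ε) (one_lt_two (α := ℝ))
    have hCn : C / 2 ^ n < ε := by
      rw [div_lt_iff₀ (by positivity)]
      rw [div_lt_iff₀ hε] at hn
      linarith [hn]
    have := Stmt13Aux.chains hne hclosed hfix (fun a ha b hb => hC ha hb) n x hx y hy
    exact Relation.ReflTransGen.mono (fun a b ⟨h1, h2⟩ => ⟨h1, h2.trans hCn.le⟩) _ _ this
  · -- positive measure
    have h0D : ![0, 0] ∈ D := by rw [hD]; simp
    have h0F : (0 : Fin 2 → ℝ) ∈ F := by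
      have := Stmt13Aux.digit_mem hne hclosed hfix h0D
      have e : castVec ![(0 : ℤ), 0] = (0 : Fin 2 → ℝ) := by
        funext i; fin_cases i <;> simp [castVec]
      rwa [e] at this
    set L : Set (Fin 2 → ℝ) := Set.range (castVec (k := 2)) with hLdef
    have hLclosed : IsClosed L := by
      have : L = ⋂ i : Fin 2, (fun x : Fin 2 → ℝ => x i) ⁻¹'
          (Set.range ((↑) : ℤ → ℝ)) := by
        ext x
        simp only [hLdef, Set.mem_range, Set.mem_iInter, Set.mem_preimage]
        constructor
        · rintro ⟨v, rfl⟩ i; exact ⟨v i, rfl⟩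
        · intro h
          choose v hv using h
          exact ⟨v, funext fun i => hv i⟩
      rw [this]
      exact isClosed_iInter fun i =>
        Int.isClosedEmbedding_coe_real.isClosed_range.preimage (continuous_apply i)
    have hSclosed : IsClosed (F + L) := hLclosed.add_left_of_isCompact hcpt
    -- halving stays in F + L
    have half : ∀ x ∈ F + L, (2 : ℝ)⁻¹ • x ∈ F + L := by
      intro x hx
      rw [Set.mem_add] at hx
      obtain ⟨f, hf, l, hl, rfl⟩ := hx
      obtain ⟨v, rfl⟩ := hl
      have key : ∃ d ∈ D, ∀ i, Even (v i - d i) := by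
        by_cases h0 : Even (v 0) <;> by_cases h1 : Even (v 1) <;>
          rw [Int.even_iff] at h0 h1
        · refine ⟨![0, 0], by rw [hD]; simp, fun i => ?_⟩
          fin_cases i <;> simp [Int.even_iff] <;> omega
        · refine ⟨![0, 1], by rw [hD]; simp, fun i => ?_⟩
          fin_cases i <;> simp [Int.even_iff, Int.odd_iff] <;> omega
        · refine ⟨![1, 0], by rw [hD]; simp, fun i => ?_⟩
          fin_cases i <;> simp [Int.even_iff, Int.odd_iff] <;> omega
        · refine ⟨![-1, -1], by rw [hD]; simp, fun i => ?_⟩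
          fin_cases i <;> simp [Int.even_iff, Int.odd_iff] <;> omega
      obtain ⟨d, hdD, hpar⟩ := key
      obtain ⟨g, hg, w, hw⟩ := Stmt13Aux.half_aux hfix hdD hf v hpar
      rw [hw]
      exact Set.mem_add.2 ⟨g, hg, castVec w, ⟨w, rfl⟩, rfl⟩
    -- all scaled lattice points are in F + L
    have lat : ∀ v : Fin 2 → ℤ, castVec v ∈ F + L :=
      fun v => Set.mem_add.2 ⟨0, h0F, castVec v, ⟨v, rfl⟩, zero_add _⟩
    have dyadic : ∀ n : ℕ, ∀ v : Fin 2 → ℤ, ((2 : ℝ)⁻¹) ^ n • castVec v ∈ F + L := by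
      intro n
      induction n with
      | zero => intro v; simpa using lat v
      | succ n ih =>
        intro v
        have := half _ (ih v)
        rw [smul_smul, ← pow_succ'] at this
        exact this
    -- F + L is all of ℝ²
    have huniv : ∀ x : Fin 2 → ℝ, x ∈ F + L := by
      intro x
      set p : ℕ → Fin 2 → ℝ :=
        fun n => ((2 : ℝ)⁻¹) ^ n • castVec (fun i => ⌊2 ^ n * x i⌋) with hp
      have hpm : ∀ n, p n ∈ F + L := fun n => dyadic n _
      have hlim : Filter.Tendsto p Filter.atTop (nhds x) := by
        rw [tendsto_pi_nhds]
        intro i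
        have hbd : ∀ n : ℕ, ‖p n i - x i‖ ≤ ((2 : ℝ)⁻¹) ^ n := by
          intro n
          have h1 : ((⌊2 ^ n * x i⌋ : ℤ) : ℝ) ≤ 2 ^ n * x i := Int.floor_le _
          have h2 : 2 ^ n * x i < (⌊2 ^ n * x i⌋ : ℤ) + 1 := Int.lt_floor_add_one _
          have hpv : p n i = ((2 : ℝ)⁻¹) ^ n * ((⌊2 ^ n * x i⌋ : ℤ) : ℝ) := by
            simp [hp, castVec]
          have he : ((2 : ℝ)⁻¹) ^ n = ((2 : ℝ) ^ n)⁻¹ := by rw [inv_pow]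
          have hpos : (0 : ℝ) < 2 ^ n := by positivity
          have hQ : (0 : ℝ) < ((2 : ℝ) ^ n)⁻¹ := inv_pos.2 hpos
          have k1 : ((2 : ℝ) ^ n)⁻¹ * ((⌊2 ^ n * x i⌋ : ℤ) : ℝ)
              ≤ ((2 : ℝ) ^ n)⁻¹ * (2 ^ n * x i) :=
            mul_le_mul_of_nonneg_left h1 hQ.le
          have k2 : ((2 : ℝ) ^ n)⁻¹ * (2 ^ n * x i)
              < ((2 : ℝ) ^ n)⁻¹ * (((⌊2 ^ n * x i⌋ : ℤ) : ℝ) + 1) :=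
            mul_lt_mul_of_pos_left h2 hQ
          have k2' : ((2 : ℝ) ^ n)⁻¹ * (((⌊2 ^ n * x i⌋ : ℤ) : ℝ) + 1)
              = ((2 : ℝ) ^ n)⁻¹ * ((⌊2 ^ n * x i⌋ : ℤ) : ℝ) + ((2 : ℝ) ^ n)⁻¹ := by
            ring
          have e1 : ((2 : ℝ) ^ n)⁻¹ * (2 ^ n * x i) = x i := by
            field_simp
          rw [hpv, he, Real.norm_eq_abs, abs_le]
          constructor <;> linarith [k1, k2, k2', e1]
        have h2 : Filter.Tendsto (fun n : ℕ => ((2 : ℝ)⁻¹) ^ n) Filter.atTop (nhds 0) :=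
          tendsto_pow_atTop_nhds_zero_of_lt_one (by norm_num) (by norm_num)
        have := squeeze_zero_norm hbd h2
        have := this.add_const (x i)
        simpa using this
      exact hSclosed.mem_of_tendsto hlim (Filter.Eventually.of_forall hpm)
    -- conclude positivity
    rw [pos_iff_ne_zero]
    intro hF0
    have hcover : (Set.univ : Set (Fin 2 → ℝ)) ⊆
        ⋃ v : Fin 2 → ℤ, (fun f => f + castVec v) '' F := by
      intro x _
      have := huniv x
      rw [Set.mem_add] at this
      obtain ⟨f, hf, l, ⟨v, rfl⟩, rfl⟩ := this
      exact Set.mem_iUnion.2 ⟨v, f, hf, rfl⟩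
    have hnull : ∀ v : Fin 2 → ℤ, volume ((fun f => f + castVec v) '' F) = 0 := by
      intro v
      have himg : (fun f => f + castVec v) '' F = (fun f => f + (-castVec v)) ⁻¹' F := by
        ext z
        simp only [Set.mem_image, Set.mem_preimage]
        constructor
        · rintro ⟨f, hf, rfl⟩; simpa using hf
        · intro h; exact ⟨z + -castVec v, h, by abel⟩
      rw [himg, measure_preimage_add_right volume (-castVec v) F]
      exact hF0
    have h0 : volume (Set.univ : Set (Fin 2 → ℝ)) = 0 :=
      measure_mono_null hcover (measure_iUnion_null hnull)
    have hpos : 0 < volume (Set.univ : Set (Fin 2 → ℝ)) :=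
      isOpen_univ.measure_pos volume ⟨0, trivial⟩
    exact hpos.ne' h0
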